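/- arXiv:2409.12057 — 2 statements merged into one kernel-verified Lean document; each statement's English description precedes it below -/
import Mathlib

section
/- With p = softmax(s) and Hess(s_k) = 0 at x, the matrix Hess(p_a) applied to e_b = ∇p_b satisfies Hess(p_a) e_b = (Σ_{k,i} (δ_{ak} − p_k) ∂_i s_k ∂_i p_b) e_a − p_a Σ_{k,i} (∂_i s_k ∂_i p_b) e_k, where e_k = ∇p_k. -/
open Real Matrix

noncomputable def pd {d : ℕ} (f : (Fin d → ℝ) → ℝ) (x : Fin d → ℝ) (i : Fin d) : ℝ :=
  fderiv ℝ f x (Pi.single i 1)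

noncomputable def softmax {C : ℕ} (a : Fin C → ℝ) : Fin C → ℝ :=
  fun i => Real.exp (a i) / ∑ k, Real.exp (a k)

noncomputable def grad {d : ℕ} (f : (Fin d → ℝ) → ℝ) (x : Fin d → ℝ) : Fin d → ℝ :=
  fun i => pd f x i

noncomputable def hess {d : ℕ} (f : (Fin d → ℝ) → ℝ) (x : Fin d → ℝ) :
    Matrix (Fin d) (Fin d) ℝ :=
  Matrix.of fun i j => pd (fun y => pd f y j) x i

lemma pd_softmax {d C : ℕ} {s : (Fin d → ℝ) → Fin C → ℝ}
    (hs : ∀ k, ContDiff ℝ 2 (fun y => s y k)) (a : Fin C) (y : Fin d → ℝ) (i : Fin d) :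
    pd (fun z => softmax (s z) a) y i =
      softmax (s y) a * (pd (fun z => s z a) y i
        - ∑ k, softmax (s y) k * pd (fun z => s z k) y i) := by
  have hdk : ∀ k, HasFDerivAt (fun z => s z k) (fderiv ℝ (fun z => s z k) y) y :=
    fun k => ((hs k).differentiable (by norm_num) y).hasFDerivAt
  have hek : ∀ k, HasFDerivAt (fun z => Real.exp (s z k))
      (Real.exp (s y k) • fderiv ℝ (fun z => s z k) y) y := fun k => (hdk k).exp
  have hD : HasFDerivAt (fun z => ∑ k, Real.exp (s z k))
      (∑ k, Real.exp (s y k) • fderiv ℝ (fun z => s z k) y) y :=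
    HasFDerivAt.fun_sum (fun k _ => hek k)
  have hD0 : (∑ k, Real.exp (s y k)) ≠ 0 :=
    (Finset.sum_pos (fun k _ => Real.exp_pos _) ⟨a, Finset.mem_univ a⟩).ne'
  have hinv : HasFDerivAt (fun z => (∑ k, Real.exp (s z k))⁻¹)
      ((ContinuousLinearMap.smulRight (1 : ℝ →L[ℝ] ℝ) (-((∑ k, Real.exp (s y k)) ^ 2)⁻¹)).comp
        (∑ k, Real.exp (s y k) • fderiv ℝ (fun z => s z k) y)) y :=
    (hasFDerivAt_inv hD0).comp y hD
  have hmul := (hek a).fun_mul hinv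
  have hfun : (fun z => softmax (s z) a)
      = fun z => Real.exp (s z a) * (∑ k, Real.exp (s z k))⁻¹ := by
    funext z; simp [softmax, div_eq_mul_inv]
  rw [pd, hfun, hmul.fderiv]
  simp only [ContinuousLinearMap.add_apply, ContinuousLinearMap.smul_apply,
    ContinuousLinearMap.comp_apply, ContinuousLinearMap.coe_sum', Finset.sum_apply,
    ContinuousLinearMap.smulRight_apply, ContinuousLinearMap.one_apply,
    smul_eq_mul, softmax, pd]
  simp only [div_mul_eq_mul_div, ← Finset.sum_div]
  field_simp
  ring


lemma softmax_contDiff {d C : ℕ} {s : (Fin d → ℝ) → Fin C → ℝ}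
    (hs : ∀ k, ContDiff ℝ 2 (fun y => s y k)) (a : Fin C) :
    ContDiff ℝ 2 (fun y => softmax (s y) a) := by
  refine ContDiff.div ((hs a).exp) (ContDiff.sum fun k _ => (hs k).exp) fun y =>
    (Finset.sum_pos (fun k _ => Real.exp_pos _) ⟨a, Finset.mem_univ a⟩).ne'

lemma hess_softmax {d C : ℕ} {s : (Fin d → ℝ) → Fin C → ℝ}
    (hs : ∀ k, ContDiff ℝ 2 (fun y => s y k)) (x : Fin d → ℝ)
    (hhess : ∀ k, hess (fun y => s y k) x = 0) (a : Fin C) (i j : Fin d) :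
    hess (fun y => softmax (s y) a) x i j =
      pd (fun y => softmax (s y) a) x i *
        (pd (fun y => s y a) x j - ∑ k, softmax (s x) k * pd (fun y => s y k) x j)
      - softmax (s x) a *
          ∑ k, pd (fun y => s y k) x j * pd (fun y => softmax (s y) k) x i := by
  have hp : ∀ k, HasFDerivAt (fun y => softmax (s y) k)
      (fderiv ℝ (fun y => softmax (s y) k) x) x :=
    fun k => ((softmax_contDiff hs k).differentiable (by norm_num) x).hasFDerivAt
  have hqc : ∀ k : Fin C, ContDiff ℝ 1 (fun y => pd (fun z => s z k) y j) := by
    intro k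
    show ContDiff ℝ 1 (fun y => fderiv ℝ (fun z => s z k) y (Pi.single j 1))
    exact ((hs k).fderiv_right (by norm_num)).clm_apply contDiff_const
  have hq : ∀ k, HasFDerivAt (fun y => pd (fun z => s z k) y j)
      (fderiv ℝ (fun y => pd (fun z => s z k) y j) x) x :=
    fun k => (((hqc k).differentiable (by norm_num)) x).hasFDerivAt
  have hq0 : ∀ k : Fin C,
      fderiv ℝ (fun y => pd (fun z => s z k) y j) x (Pi.single i 1) = 0 := by
    intro k
    have h0 : hess (fun y => s y k) x i j = 0 := by rw [hhess k]; rfl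
    simpa [hess, pd] using h0
  have hinner := (hq a).fun_sub (HasFDerivAt.fun_sum (u := Finset.univ)
    (fun k _ => (hp k).fun_mul (hq k)))
  have htot := (hp a).fun_mul hinner
  have hrw : (fun y => pd (fun z => softmax (s z) a) y j)
      = fun y => softmax (s y) a * (pd (fun z => s z a) y j
          - ∑ k, softmax (s y) k * pd (fun z => s z k) y j) :=
    funext fun y => pd_softmax hs a y j
  show pd (fun y => pd (fun z => softmax (s z) a) y j) x i = _
  rw [pd, hrw, htot.fderiv]
  simp only [ContinuousLinearMap.add_apply, ContinuousLinearMap.smul_apply,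
    ContinuousLinearMap.sub_apply, ContinuousLinearMap.coe_sum', Finset.sum_apply,
    smul_eq_mul, hq0, mul_zero, zero_add, mul_zero, zero_sub]
  simp only [pd]
  ring

lemma sum_alg {d C : ℕ} (E S : Fin C → Fin d → ℝ) (P : Fin C → ℝ) (a b : Fin C) (i : Fin d) :
    ∑ j, (E a i * (S a j - ∑ k, P k * S k j) - P a * ∑ k, S k j * E k i) * E b j
      = (∑ k, ∑ j, ((if a = k then (1:ℝ) else 0) - P k) * S k j * E b j) * E a i
        - P a * ∑ k, (∑ j, S k j * E b j) * E k i := by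
  conv_rhs => rw [Finset.sum_comm]
  have h2 : (∑ k, (∑ j, S k j * E b j) * E k i) = ∑ j, ∑ k, S k j * E b j * E k i := by
    simp only [Finset.sum_mul]; exact Finset.sum_comm
  rw [h2, Finset.sum_mul, Finset.mul_sum, ← Finset.sum_sub_distrib]
  refine Finset.sum_congr rfl fun j _ => ?_
  simp only [sub_mul, ite_mul, one_mul, zero_mul, Finset.sum_sub_distrib,
    Finset.sum_ite_eq, Finset.mem_univ, if_true, Finset.sum_mul, Finset.mul_sum]
  ring_nf
  have e1 : (E a i * ∑ x, P x * S x j) * E b j = ∑ k, P k * S k j * E b j * E a i := by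
    rw [Finset.mul_sum, Finset.sum_mul]; exact Finset.sum_congr rfl fun k _ => by ring
  have e2 : ∑ x, P a * S x j * E x i * E b j = ∑ x, P a * S x j * E b j * E x i :=
    Finset.sum_congr rfl fun k _ => by ring
  rw [e1]
  have e3 : ∑ k, P k * S k j * E b j * E a i = ∑ x, E a i * E b j * P x * S x j :=
    Finset.sum_congr rfl fun k _ => by ring
  rw [e3]; ring

/-- Action of the Hessian of p_a on the frame vector e_b = ∇p_b. -/
theorem stmt10 (d C : ℕ) (s : (Fin d → ℝ) → Fin C → ℝ)
    (hs : ∀ k, ContDiff ℝ 2 (fun y => s y k)) (x : Fin d → ℝ)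
    (hhess : ∀ k, hess (fun y => s y k) x = 0) (a b : Fin C) :
    (hess (fun y => softmax (s y) a) x).mulVec (grad (fun y => softmax (s y) b) x)
      = (∑ k, ∑ i, ((if a = k then (1:ℝ) else 0) - softmax (s x) k) *
            pd (fun y => s y k) x i * pd (fun y => softmax (s y) b) x i) •
          grad (fun y => softmax (s y) a) x
        - softmax (s x) a •
          ∑ k, (∑ i, pd (fun y => s y k) x i * pd (fun y => softmax (s y) b) x i) •
            grad (fun y => softmax (s y) k) x := by
  funext i
  have key := sum_alg (fun k m => pd (fun y => softmax (s y) k) x m)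
    (fun k m => pd (fun y => s y k) x m) (fun k => softmax (s x) k) a b i
  simp only [mulVec, dotProduct, Pi.sub_apply, Pi.smul_apply, Finset.sum_apply,
    smul_eq_mul, grad]
  simp only [hess_softmax hs x hhess a]
  simpa using key
end

section
/- With D = J(s)^T (P − pp^T) J(s) and Hess(s_k)=0 at x, the directional derivative of D along e_a = ∇p_a satisfies e_a(D)(x) = J(s)^T A_a J(s), where (A_a)_{kl} = Σ_i ∂_i p_a [(δ_{kl} − p_l) ∂_i p_k − p_k ∂_i p_l]. -/
open Real Matrix

/-- Jacobian of the score function. -/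
noncomputable def Js {d C : ℕ} (s : (Fin d → ℝ) → Fin C → ℝ) (y : Fin d → ℝ) :
    Matrix (Fin C) (Fin d) ℝ :=
  Matrix.of fun k i => pd (fun z => s z k) y i

/-- The data information matrix D = J(s)ᵀ (P − ppᵀ) J(s). -/
noncomputable def Dmat {d C : ℕ} (s : (Fin d → ℝ) → Fin C → ℝ) (y : Fin d → ℝ) :
    Matrix (Fin d) (Fin d) ℝ :=
  (Js s y)ᵀ * (Matrix.diagonal (softmax (s y))
      - Matrix.vecMulVec (softmax (s y)) (softmax (s y))) * Js s y

/-- The matrix A_a. -/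
noncomputable def Amat {d C : ℕ} (s : (Fin d → ℝ) → Fin C → ℝ) (a : Fin C)
    (x : Fin d → ℝ) : Matrix (Fin C) (Fin C) ℝ :=
  Matrix.of fun k l => ∑ i, pd (fun y => softmax (s y) a) x i *
    (((if k = l then (1:ℝ) else 0) - softmax (s x) l) * pd (fun y => softmax (s y) k) x i
      - softmax (s x) k * pd (fun y => softmax (s y) l) x i)

lemma pd_const {d : ℕ} (c : ℝ) (x : Fin d → ℝ) (i : Fin d) : pd (fun _ => c) x i = 0 := by
  simp [pd]

lemma pd_mul {d : ℕ} {f g : (Fin d → ℝ) → ℝ} {x : Fin d → ℝ}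
    (hf : DifferentiableAt ℝ f x) (hg : DifferentiableAt ℝ g x) (i : Fin d) :
    pd (fun y => f y * g y) x i = pd f x i * g x + f x * pd g x i := by
  unfold pd
  rw [fderiv_fun_mul hf hg]
  simp only [ContinuousLinearMap.add_apply, ContinuousLinearMap.smul_apply, smul_eq_mul]
  ring

lemma pd_sub {d : ℕ} {f g : (Fin d → ℝ) → ℝ} {x : Fin d → ℝ}
    (hf : DifferentiableAt ℝ f x) (hg : DifferentiableAt ℝ g x) (i : Fin d) :
    pd (fun y => f y - g y) x i = pd f x i - pd g x i := by
  unfold pd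
  rw [fderiv_fun_sub hf hg]
  simp

lemma pd_sum {d : ℕ} {ι : Type*} (t : Finset ι) {f : ι → (Fin d → ℝ) → ℝ} {x : Fin d → ℝ}
    (hf : ∀ k ∈ t, DifferentiableAt ℝ (f k) x) (i : Fin d) :
    pd (fun y => ∑ k ∈ t, f k y) x i = ∑ k ∈ t, pd (f k) x i := by
  unfold pd
  rw [fderiv_fun_sum hf]
  simp

/-- Directional derivative of the data information matrix along e_a = ∇p_a. -/
theorem stmt13 (d C : ℕ) (s : (Fin d → ℝ) → Fin C → ℝ)
    (hs : ∀ k, ContDiff ℝ 2 (fun y => s y k)) (x : Fin d → ℝ)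
    (hhess : ∀ k, hess (fun y => s y k) x = 0) (a : Fin C) (i j : Fin d) :
    ∑ m, pd (fun y => softmax (s y) a) x m * pd (fun y => Dmat s y i j) x m
      = ((Js s x)ᵀ * Amat s a x * Js s x) i j := by
  have hC : Nonempty (Fin C) := ⟨a⟩
  have hsd : ∀ k, Differentiable ℝ (fun y => s y k) := fun k => (hs k).differentiable two_ne_zero
  -- differentiability of the softmax components
  have hP : ∀ c, Differentiable ℝ (fun y => softmax (s y) c) := by
    intro c
    have hden : ∀ y : Fin d → ℝ, (∑ k, Real.exp (s y k)) ≠ 0 := fun y =>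
      (Finset.sum_pos (fun k _ => Real.exp_pos _) Finset.univ_nonempty).ne'
    have hnum : Differentiable ℝ (fun y => Real.exp (s y c)) := (hsd c).exp
    have hde : Differentiable ℝ (fun y : Fin d → ℝ => ∑ k, Real.exp (s y k)) :=
      Differentiable.fun_sum fun k _ => (hsd k).exp
    simp only [softmax, div_eq_mul_inv]
    exact hnum.mul (hde.inv hden)
  -- differentiability of the entries of the Jacobian of s
  have hU : ∀ (k : Fin C) (i' : Fin d), Differentiable ℝ (fun y => pd (fun z => s z k) y i') := by
    intro k i'
    have h1 : ContDiff ℝ 1 (fderiv ℝ (fun z => s z k)) :=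
      (hs k).fderiv_right (by norm_num)
    have h2 : Differentiable ℝ (fderiv ℝ (fun z => s z k)) := h1.differentiable one_ne_zero
    exact fun y => (h2 y).clm_apply (differentiableAt_const _)
  -- vanishing of the second derivatives at x
  have hU0 : ∀ (k : Fin C) (i' m : Fin d),
      pd (fun y => pd (fun z => s z k) y i') x m = 0 := by
    intro k i' m
    have h := congrFun (congrFun (hhess k) m) i'
    simpa [hess] using h
  -- differentiability of the middle-matrix entries
  have hM : ∀ k l : Fin C, DifferentiableAt ℝ
      (fun y => (if k = l then softmax (s y) k else 0) - softmax (s y) k * softmax (s y) l) x := by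
    intro k l
    by_cases hkl : k = l
    · simp only [hkl, if_true]
      exact ((hP l) x).sub (((hP l) x).mul ((hP l) x))
    · simp only [hkl, if_false]
      exact (differentiableAt_const 0).sub (((hP k) x).mul ((hP l) x))
  -- derivative of the middle matrix entries
  have hpdM : ∀ (k l : Fin C) (m : Fin d),
      pd (fun y => (if k = l then softmax (s y) k else 0)
        - softmax (s y) k * softmax (s y) l) x m
      = (if k = l then pd (fun y => softmax (s y) k) x m else 0)
        - (pd (fun y => softmax (s y) k) x m * softmax (s x) l
           + softmax (s x) k * pd (fun y => softmax (s y) l) x m) := by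
    intro k l m
    by_cases hkl : k = l
    · subst hkl
      simp only [if_true]
      rw [pd_sub ((hP k) x) (((hP k) x).fun_mul ((hP k) x)), pd_mul ((hP k) x) ((hP k) x)]
    · simp only [hkl, if_false]
      rw [pd_sub (differentiableAt_const 0) (((hP k) x).fun_mul ((hP l) x)),
        pd_mul ((hP k) x) ((hP l) x), pd_const]
  -- rewrite Dmat entry as an explicit double sum
  have hD : ∀ y, Dmat s y i j =
      ∑ k, ∑ l, pd (fun z => s z k) y i *
        (((if k = l then softmax (s y) k else 0) - softmax (s y) k * softmax (s y) l)
          * pd (fun z => s z l) y j) := by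
    intro y
    simp only [Dmat, Matrix.mul_apply, Matrix.transpose_apply, Matrix.sub_apply,
      Matrix.diagonal_apply, Matrix.vecMulVec_apply, Js, Matrix.of_apply,
      Finset.sum_mul]
    rw [Finset.sum_comm]
    refine Finset.sum_congr rfl fun k _ => Finset.sum_congr rfl fun l _ => ?_
    by_cases hkl : k = l <;> simp [hkl] <;> ring
  -- derivative of each term of the double sum at x
  have hterm : ∀ (k l : Fin C) (m : Fin d),
      pd (fun y => pd (fun z => s z k) y i *
        (((if k = l then softmax (s y) k else 0) - softmax (s y) k * softmax (s y) l)
          * pd (fun z => s z l) y j)) x m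
      = pd (fun z => s z k) x i *
        ((( if k = l then pd (fun y => softmax (s y) k) x m else 0)
          - (pd (fun y => softmax (s y) k) x m * softmax (s x) l
             + softmax (s x) k * pd (fun y => softmax (s y) l) x m))
          * pd (fun z => s z l) x j) := by
    intro k l m
    rw [pd_mul ((hU k i) x) ((hM k l).fun_mul ((hU l j) x)),
      pd_mul (hM k l) ((hU l j) x), hU0, hU0, hpdM]
    ring
  -- compute the derivative of the Dmat entry
  have hpdD : ∀ m : Fin d, pd (fun y => Dmat s y i j) x m
      = ∑ k, ∑ l, pd (fun z => s z k) x i *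
        ((( if k = l then pd (fun y => softmax (s y) k) x m else 0)
          - (pd (fun y => softmax (s y) k) x m * softmax (s x) l
             + softmax (s x) k * pd (fun y => softmax (s y) l) x m))
          * pd (fun z => s z l) x j) := by
    intro m
    have : (fun y => Dmat s y i j) = fun y =>
        ∑ k, ∑ l, pd (fun z => s z k) y i *
          (((if k = l then softmax (s y) k else 0) - softmax (s y) k * softmax (s y) l)
            * pd (fun z => s z l) y j) := funext hD
    rw [this]
    rw [pd_sum Finset.univ (fun k _ => DifferentiableAt.fun_sum
      (fun l _ => ((hU k i) x).fun_mul ((hM k l).fun_mul ((hU l j) x)))) m]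
    refine Finset.sum_congr rfl fun k _ => ?_
    rw [pd_sum Finset.univ (fun l _ => ((hU k i) x).fun_mul ((hM k l).fun_mul ((hU l j) x))) m]
    exact Finset.sum_congr rfl fun l _ => hterm k l m
  -- now pure algebra
  have hL : (∑ m, pd (fun y => softmax (s y) a) x m * pd (fun y => Dmat s y i j) x m)
      = ∑ k, ∑ l, ∑ m, pd (fun y => softmax (s y) a) x m *
          (pd (fun z => s z k) x i *
            ((( if k = l then pd (fun y => softmax (s y) k) x m else 0)
              - (pd (fun y => softmax (s y) k) x m * softmax (s x) l
                 + softmax (s x) k * pd (fun y => softmax (s y) l) x m))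
              * pd (fun z => s z l) x j)) := by
    simp only [hpdD, Finset.mul_sum]
    rw [Finset.sum_comm]
    exact Finset.sum_congr rfl fun k _ => Finset.sum_comm
  rw [hL]
  simp only [Matrix.mul_apply, Matrix.transpose_apply, Amat, Js, Matrix.of_apply,
    Finset.sum_mul, Finset.mul_sum]
  conv_rhs => rw [Finset.sum_comm]
  refine Finset.sum_congr rfl fun k _ => Finset.sum_congr rfl fun l _ =>
    Finset.sum_congr rfl fun m _ => ?_
  by_cases hkl : k = l <;> simp only [hkl, if_true, if_false] <;> ring
end
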